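/- Suppose 0 < ℓ_y ≤ 1. Then the shepherd-to-sheep force is uniformly bounded by the maximum shepherd force f_y^max = γ₁/ℓ_y: for all x, y ∈ ℝ², ‖f_y(x, y)‖ ≤ γ₁/ℓ_y. -/

import Mathlib

open scoped RealInnerProductSpace

noncomputable section

/-- The plane ℝ². -/
abbrev E2 : Type := EuclideanSpace ℝ (Fin 2)

/-- Attraction function `φ_a(x) = -m_a x`. -/
def phiA (ma : ℝ) (v : E2) : E2 := (-ma) • v

/-- Bounded repulsion function `φ_b` (with `M_b = m_b / ℓ_b`). -/
def phiB (mb lb : ℝ) (v : E2) : E2 :=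
  if lb < ‖v‖ then (mb / ‖v‖ ^ 2) • v else ((mb / lb) / ‖v‖) • v

/-- The function `g` with `g(0) = 0` and `g(d) = exp(-1/d)` for `d ≠ 0`. -/
def gfun (d : ℝ) : ℝ := if d = 0 then 0 else Real.exp (-(1 / d))

/- Shepherd-to-sheep force `f_y` (with `γ₂ = γ₁ exp(1/ℓ_y)`), `f_y(y, y) = 0`. -/
open Classical in
def fy (γ1 ly : ℝ) (x y : E2) : E2 :=
  if x = y then 0
  else if ly < ‖x - y‖ then (γ1 / ‖x - y‖ ^ 2) • (x - y)
  else (γ1 * Real.exp (1 / ly) * gfun ‖x - y‖ / ‖x - y‖ ^ 2) • (x - y)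

/-- if `0 < ℓ_y ≤ 1`, the shepherd force is uniformly bounded by
the maximum shepherd force `f_y^max = γ₁ / ℓ_y`. -/
theorem statement12 (γ1 ly : ℝ) (hγ1 : 0 < γ1) (hly : 0 < ly) (hly1 : ly ≤ 1) :
    ∀ x y : E2, ‖fy γ1 ly x y‖ ≤ γ1 / ly := by
  intro x y
  unfold fy
  by_cases hxy : x = y
  · simp [hxy]
    positivity
  · have hr : (0:ℝ) < ‖x - y‖ := by
      rw [norm_pos_iff, sub_ne_zero]; exact hxy
    set r := ‖x - y‖ with hrdef
    by_cases h : ly < r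
    · rw [if_neg hxy, if_pos h, norm_smul, Real.norm_eq_abs,
        abs_of_pos (by positivity), div_mul_eq_mul_div, pow_two, mul_comm r r,
        ← div_div, mul_div_assoc, div_self hr.ne', mul_one]
      exact div_le_div_of_nonneg_left hγ1.le hly (le_of_lt h)
    · push_neg at h
      rw [if_neg hxy, if_neg (not_lt.mpr h)]
      have hg : gfun r = Real.exp (-(1/r)) := by
        rw [gfun, if_neg hr.ne']
      rw [norm_smul, Real.norm_eq_abs, hg,
        abs_of_pos (by positivity), div_mul_eq_mul_div, pow_two, mul_comm r r,
        ← div_div, mul_div_assoc, div_self hr.ne', mul_one]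
      -- need γ1 * exp(1/ly) * exp(-(1/r)) / r ≤ γ1 / ly
      rw [mul_assoc, ← Real.exp_add]
      set t := 1/ly + -(1/r) with ht
      have hs : 1 - t ≤ Real.exp (-t) := by
        have := Real.add_one_le_exp (-t); linarith
      have htle : Real.exp t ≤ 1 / (1 - t) := by
        have h1t : 0 < 1 - t := by
          have h1 : 1/ly ≤ 1/r := one_div_le_one_div_of_le hr h
          rw [ht]; linarith
        have h2 : Real.exp t * (1 - t) ≤ 1 := by
          calc Real.exp t * (1 - t) ≤ Real.exp t * Real.exp (-t) :=
                mul_le_mul_of_nonneg_left hs (Real.exp_pos t).le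
            _ = 1 := by rw [← Real.exp_add]; simp
        rw [le_div_iff₀ h1t]; exact h2
      have key : Real.exp t / r ≤ 1 / ly := by
        have h1t : 0 < 1 - t := by
          have h1 : 1/ly ≤ 1/r := one_div_le_one_div_of_le hr h
          rw [ht]; linarith
        have step : Real.exp t / r ≤ 1 / ((1 - t) * r) := by
          rw [div_le_div_iff₀ hr (by positivity)]
          calc Real.exp t * ((1-t)*r) = (Real.exp t * (1-t)) * r := by ring
            _ ≤ (1/(1-t) * (1-t)) * r := by
                apply mul_le_mul_of_nonneg_right _ hr.le
                exact mul_le_mul_of_nonneg_right htle h1t.le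
            _ = r := by field_simp
            _ = 1 * r := (one_mul r).symm
        refine step.trans ?_
        rw [div_le_div_iff₀ (by positivity) hly, one_mul, one_mul]
        -- ly ≤ (1 - t) * r = (1 - 1/ly + 1/r) * r = r - r/ly + 1
        have : (1 - t) * r = r - r/ly + 1 := by
          rw [ht]; field_simp; ring
        rw [this]
        -- ly ≤ r - r/ly + 1  ⟺  ly*ly ≤ r*ly - r + ly ⟺ ly(ly-1) ≤ r(ly-1)
        have key2 : ly * (ly - 1) ≤ r * (ly - 1) := by
          rcases eq_or_lt_of_le hly1 with h1 | h1
          · simp [h1]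
          · have := mul_le_mul_of_nonpos_right h (by linarith : ly - 1 ≤ 0)
            linarith
        have hgoal : ly * ly ≤ (r - r/ly + 1) * ly := by
          have hrr : r/ly*ly = r := by field_simp
          nlinarith
        exact (mul_le_mul_iff_of_pos_right hly).mp hgoal
      calc γ1 * Real.exp t / r = γ1 * (Real.exp t / r) := by ring
        _ ≤ γ1 * (1/ly) := mul_le_mul_of_nonneg_left key hγ1.le
        _ = γ1 / ly := by ring

end
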